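/- Let F ⊆ ℝ^d be compact and suppose there exists an integer k > 1 such that for every x ∈ F and every R ∈ (0,1), the axis-parallel closed cube Q(x,R) of side length R centred at x contains two cubes with disjoint interiors, each of side length 2^{-k}R and each centred at a point of F ∩ Q(x,R). Then the lower dimension of F satisfies dim_L F ≥ 1/k. -/

import Mathlib

open Set Metric Filter Topology

/-- Smallest number of axis-parallel cubes of side length `r` (closed balls of radius `r/2`
in the sup metric on `Fin d → ℝ`) needed to cover `A`. -/
noncomputable def coverNum (d : ℕ) (A : Set (Fin d → ℝ)) (r : ℝ) : ℕ :=
  sInf {n : ℕ | ∃ t : Finset (Fin d → ℝ), t.card = n ∧ A ⊆ ⋃ x ∈ t, closedBall x (r / 2)}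

/-- The lower dimension. -/
noncomputable def lowerDim (d : ℕ) (F : Set (Fin d → ℝ)) : ℝ :=
  sSup {s : ℝ | 0 ≤ s ∧ ∃ C : ℝ, 0 < C ∧ ∀ R : ℝ, 0 < R → R < 1 → ∀ r : ℝ, 0 < r → r < R →
    ∀ x ∈ F, C * (R / r) ^ s ≤ (coverNum d (closedBall x R ∩ F) r : ℝ)}

/-- The Assouad dimension. -/
noncomputable def assouadDim (d : ℕ) (F : Set (Fin d → ℝ)) : ℝ :=
  sInf {s : ℝ | 0 ≤ s ∧ ∃ C : ℝ, 0 < C ∧ ∀ R : ℝ, 0 < R → ∀ r : ℝ, 0 < r → r < R →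
    ∀ x ∈ F, (coverNum d (closedBall x R ∩ F) r : ℝ) ≤ C * (R / r) ^ s}

/-- Upper box dimension. -/
noncomputable def ubDim (d : ℕ) (A : Set (Fin d → ℝ)) : ℝ :=
  Filter.limsup (fun r : ℝ => Real.log (coverNum d A r) / (-Real.log r)) (𝓝[>] (0:ℝ))

/-- Lower box dimension. -/
noncomputable def lbDim (d : ℕ) (A : Set (Fin d → ℝ)) : ℝ :=
  Filter.liminf (fun r : ℝ => Real.log (coverNum d A r) / (-Real.log r)) (𝓝[>] (0:ℝ))

/-- `D` is a miniset of `F`: `D = (λF + t) ∩ [0,1]^d` with `λ ≥ 1`, and `D` is nonempty. -/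
def IsMiniset (d : ℕ) (F D : Set (Fin d → ℝ)) : Prop :=
  ∃ lam : ℝ, 1 ≤ lam ∧ ∃ t : Fin d → ℝ,
    D = ((fun x => lam • x + t) '' F) ∩ Icc 0 1 ∧ D.Nonempty

/-- `E` is a microset of `F`: a Hausdorff-metric limit of minisets of `F`. -/
def IsMicroset (d : ℕ) (F E : Set (Fin d → ℝ)) : Prop :=
  IsCompact E ∧ E ⊆ Icc 0 1 ∧ ∃ D : ℕ → Set (Fin d → ℝ),
    (∀ n, IsMiniset d F (D n)) ∧
    Tendsto (fun n => hausdorffDist (D n) E) atTop (𝓝 0)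

/-- The gallery of `F`: microsets intersecting the interior of the unit cube. -/
def InGallery (d : ℕ) (F E : Set (Fin d → ℝ)) : Prop :=
  IsMicroset d F E ∧ (E ∩ interior (Icc (0 : Fin d → ℝ) 1)).Nonempty

section aux
variable {d : ℕ}

lemma grid_cover (c : Fin d → ℝ) (ρ r : ℝ) (hr : 0 < r) :
    ∃ t : Finset (Fin d → ℝ), (closedBall c ρ ⊆ ⋃ y ∈ t, closedBall y (r / 2)) ∧
      t.card ≤ (⌊2 * ρ / r⌋₊ + 1) ^ d := by
  classical
  set m : ℕ := ⌊2 * ρ / r⌋₊ + 1 with hm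
  set f : (Fin d → Fin m) → (Fin d → ℝ) :=
    fun g j => c j - ρ + r / 2 + (g j : ℝ) * r with hf
  refine ⟨Finset.image f Finset.univ, ?_, ?_⟩
  · intro p hp
    simp only [mem_closedBall] at hp
    have hρ0 : 0 ≤ ρ := dist_nonneg.trans hp
    have hcoord : ∀ j, |p j - c j| ≤ ρ := by
      intro j
      have := dist_le_pi_dist p c j
      rw [Real.dist_eq] at this
      exact this.trans hp
    have hz : ∀ j, 0 ≤ (p j - c j + ρ) / r := by
      intro j
      have h1 := (abs_le.1 (hcoord j)).1
      have : 0 ≤ p j - c j + ρ := by linarith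
      positivity
    have hlt : ∀ j, ⌊(p j - c j + ρ) / r⌋₊ < m := by
      intro j
      have h2 := (abs_le.1 (hcoord j)).2
      have hle : (p j - c j + ρ) / r ≤ 2 * ρ / r :=
        (div_le_div_iff_of_pos_right hr).2 (by linarith)
      exact Nat.lt_succ_of_le (Nat.floor_le_floor hle)
    set g : Fin d → Fin m := fun j => ⟨⌊(p j - c j + ρ) / r⌋₊, hlt j⟩ with hg
    have : p ∈ closedBall (f g) (r / 2) := by
      rw [mem_closedBall]
      rw [dist_pi_le_iff (by positivity)]
      intro j
      rw [Real.dist_eq]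
      set z : ℝ := p j - c j + ρ with hzdef
      have h0 : 0 ≤ z / r := hz j
      have hfl : (⌊z / r⌋₊ : ℝ) ≤ z / r := Nat.floor_le h0
      have hfl2 : z / r < ⌊z / r⌋₊ + 1 := Nat.lt_floor_add_one _
      have hval : f g j = c j - ρ + r / 2 + (⌊z / r⌋₊ : ℝ) * r := rfl
      rw [hval]
      have h1 : (⌊z / r⌋₊ : ℝ) * r ≤ z := by
        rw [← le_div_iff₀ hr]; exact hfl
      have h2 : z < (⌊z / r⌋₊ : ℝ) * r + r := by
        have := (div_lt_iff₀ hr).1 hfl2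
        linarith
      rw [abs_le]
      simp only [hzdef] at h1 h2
      constructor <;> linarith
    exact mem_iUnion₂.2 ⟨f g, Finset.mem_image_of_mem f (Finset.mem_univ g), this⟩
  · calc (Finset.image f Finset.univ).card ≤ (Finset.univ : Finset (Fin d → Fin m)).card :=
        Finset.card_image_le
    _ = m ^ d := by simp [Fintype.card_fun]

lemma coverNum_le_card {A : Set (Fin d → ℝ)} {r : ℝ} (t : Finset (Fin d → ℝ))
    (h : A ⊆ ⋃ x ∈ t, closedBall x (r / 2)) : coverNum d A r ≤ t.card :=
  Nat.sInf_le ⟨t, rfl, h⟩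

lemma exists_optimal_cover {A : Set (Fin d → ℝ)} {r : ℝ}
    (h : ∃ t : Finset (Fin d → ℝ), A ⊆ ⋃ x ∈ t, closedBall x (r / 2)) :
    ∃ t : Finset (Fin d → ℝ), t.card = coverNum d A r ∧ A ⊆ ⋃ x ∈ t, closedBall x (r / 2) := by
  obtain ⟨t0, h0⟩ := h
  have hne : {n : ℕ | ∃ t : Finset (Fin d → ℝ), t.card = n ∧
      A ⊆ ⋃ x ∈ t, closedBall x (r / 2)}.Nonempty := ⟨t0.card, t0, rfl, h0⟩
  obtain ⟨t, ht1, ht2⟩ := Nat.sInf_mem hne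
  exact ⟨t, ht1, ht2⟩

lemma exists_cover_of_subset_ball {A : Set (Fin d → ℝ)} {r : ℝ} (hr : 0 < r)
    {c : Fin d → ℝ} {ρ : ℝ} (hA : A ⊆ closedBall c ρ) :
    ∃ t : Finset (Fin d → ℝ), A ⊆ ⋃ x ∈ t, closedBall x (r / 2) := by
  obtain ⟨t, ht, _⟩ := grid_cover c ρ r hr
  exact ⟨t, hA.trans ht⟩

lemma one_le_coverNum {A : Set (Fin d → ℝ)} {r : ℝ}
    (hA : A.Nonempty) (h : ∃ t : Finset (Fin d → ℝ), A ⊆ ⋃ x ∈ t, closedBall x (r / 2)) :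
    1 ≤ coverNum d A r := by
  obtain ⟨t, ht1, ht2⟩ := exists_optimal_cover h
  rcases Nat.eq_zero_or_pos (coverNum d A r) with h0 | h0
  · exfalso
    rw [h0] at ht1
    rw [Finset.card_eq_zero.1 ht1] at ht2
    obtain ⟨a, ha⟩ := hA
    simpa using ht2 ha
  · exact h0

lemma coverNum_mono {A B : Set (Fin d → ℝ)} {r : ℝ} (hAB : A ⊆ B)
    (h : ∃ t : Finset (Fin d → ℝ), B ⊆ ⋃ x ∈ t, closedBall x (r / 2)) :
    coverNum d A r ≤ coverNum d B r := by
  obtain ⟨t, ht1, ht2⟩ := exists_optimal_cover h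
  rw [← ht1]
  exact coverNum_le_card t (hAB.trans ht2)

lemma coverNum_split {A A₁ A₂ : Set (Fin d → ℝ)} {r : ℝ} (hr : 0 < r)
    (h1 : A₁ ⊆ A) (h2 : A₂ ⊆ A)
    (hsep : ∀ p ∈ A₁, ∀ q ∈ A₂, r < dist p q)
    (h : ∃ t : Finset (Fin d → ℝ), A ⊆ ⋃ x ∈ t, closedBall x (r / 2)) :
    coverNum d A₁ r + coverNum d A₂ r ≤ coverNum d A r := by
  classical
  obtain ⟨t, ht1, ht2⟩ := exists_optimal_cover h
  set P : (Fin d → ℝ) → Prop := fun y => ∃ p ∈ A₁, p ∈ closedBall y (r / 2) with hP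
  have hc1 : A₁ ⊆ ⋃ x ∈ t.filter P, closedBall x (r / 2) := by
    intro p hp
    obtain ⟨y, hy, hpy⟩ := mem_iUnion₂.1 (ht2 (h1 hp))
    exact mem_iUnion₂.2 ⟨y, Finset.mem_filter.2 ⟨hy, ⟨p, hp, hpy⟩⟩, hpy⟩
  have hc2 : A₂ ⊆ ⋃ x ∈ t.filter (fun y => ¬ P y), closedBall x (r / 2) := by
    intro q hq
    obtain ⟨y, hy, hqy⟩ := mem_iUnion₂.1 (ht2 (h2 hq))
    refine mem_iUnion₂.2 ⟨y, Finset.mem_filter.2 ⟨hy, ?_⟩, hqy⟩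
    rintro ⟨p, hp, hpy⟩
    have : dist p q ≤ r := by
      calc dist p q ≤ dist p y + dist y q := dist_triangle _ _ _
      _ ≤ r / 2 + r / 2 := by
          refine add_le_add (mem_closedBall.1 hpy) ?_
          rw [dist_comm]; exact mem_closedBall.1 hqy
      _ = r := by ring
    exact absurd this (not_le.2 (hsep p hp q hq))
  calc coverNum d A₁ r + coverNum d A₂ r ≤ (t.filter P).card + (t.filter (fun y => ¬ P y)).card :=
      add_le_add (coverNum_le_card _ hc1) (coverNum_le_card _ hc2)
  _ = t.card := Finset.card_filter_add_card_filter_not P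
  _ = coverNum d A r := ht1

lemma dist_ge_of_disjoint_interiors {y z : Fin d → ℝ} {ρ : ℝ} (hρ : 0 < ρ)
    (h : Disjoint (interior (closedBall y ρ)) (interior (closedBall z ρ))) :
    2 * ρ ≤ dist y z := by
  by_contra h'
  push_neg at h'
  set m := midpoint ℝ y z with hm
  have h1 : m ∈ ball y ρ := by
    rw [mem_ball, dist_comm]
    rw [dist_left_midpoint]
    simp only [Real.norm_ofNat]
    rw [inv_mul_lt_iff₀ (by norm_num : (0:ℝ) < 2)]
    linarith
  have h2 : m ∈ ball z ρ := by
    rw [mem_ball, dist_comm]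
    rw [hm, midpoint_comm, dist_left_midpoint]
    simp only [Real.norm_ofNat]
    rw [inv_mul_lt_iff₀ (by norm_num : (0:ℝ) < 2)]
    rw [dist_comm]
    linarith
  exact Set.disjoint_left.1 h (ball_subset_interior_closedBall h1)
    (ball_subset_interior_closedBall h2)

end aux

-- generic: (X - μ)^s ≥ X^s - μ/X   for 0 < X ≤ 1, 0 ≤ μ < X, 0 < s ≤ 1
open Real in
lemma rpow_sub_margin {X μ s : ℝ} (hX0 : 0 < X) (hX1 : X ≤ 1) (hμ0 : 0 ≤ μ) (hμX : μ < X)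
    (hs0 : 0 < s) (hs1 : s ≤ 1) : X ^ s - μ / X ≤ (X - μ) ^ s := by
  have ht0 : 0 < (X - μ) / X := div_pos (by linarith) hX0
  have ht1 : (X - μ) / X ≤ 1 := by
    rw [div_le_one hX0]; linarith
  have hXs0 : 0 < X ^ s := rpow_pos_of_pos hX0 s
  have hXs1 : X ^ s ≤ 1 := rpow_le_one (le_of_lt hX0) hX1 (le_of_lt hs0)
  have hfact : (X - μ) ^ s = X ^ s * (((X - μ) / X)) ^ s := by
    rw [← mul_rpow (le_of_lt hX0) (le_of_lt ht0)]
    congr 1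
    field_simp
  have hts : (X - μ) / X ≤ ((X - μ) / X) ^ s := by
    have := rpow_le_rpow_of_exponent_ge ht0 ht1 hs1
    rwa [rpow_one] at this
  have h1 : X ^ s * ((X - μ) / X) ≤ (X - μ) ^ s := by
    rw [hfact]
    exact mul_le_mul_of_nonneg_left hts (le_of_lt hXs0)
  have h2 : X ^ s - μ / X ≤ X ^ s * ((X - μ) / X) := by
    have : X ^ s * ((X - μ) / X) = X ^ s - X ^ s * (μ / X) := by
      field_simp
    rw [this]
    have : X ^ s * (μ / X) ≤ μ / X := by
      nlinarith [div_nonneg hμ0 (le_of_lt hX0)]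
    linarith
  linarith

open Real in
lemma kraft_A {s b ε μ : ℝ} (hs0 : 0 < s) (hs1 : s ≤ 1) (hb0 : 0 < b) (hb1 : b ≤ 1/4)
    (hε0 : 0 < ε) (hε16 : ε ≤ 1/16) (hD : 1 < 2 * b ^ s) (hεD : ε ≤ (2 * b ^ s - 1)/4)
    (hμ0 : 0 ≤ μ) (hμ : μ ≤ (2 * b ^ s - 1) * b / 8) :
    1 ≤ 2 * (b * (1 - ε) - μ) ^ s := by
  set X := b * (1 - ε) with hX
  set D := 2 * b ^ s - 1 with hDdef
  have hD0 : 0 < D := by simp only [hDdef]; linarith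
  have hbs1 : b ^ s ≤ 1 := rpow_le_one (le_of_lt hb0) (by linarith) (le_of_lt hs0)
  have hD1 : D ≤ 1 := by simp only [hDdef]; linarith
  have hX0 : 0 < X := by simp only [hX]; nlinarith
  have hX1 : X ≤ 1 := by simp only [hX]; nlinarith
  have hXb : b / 2 ≤ X := by simp only [hX]; nlinarith
  have hμX : μ < X := by
    have : μ ≤ b / 8 := by nlinarith
    linarith
  have hkey := rpow_sub_margin hX0 hX1 hμ0 hμX hs0 hs1
  -- X^s ≥ b^s * (1-ε)
  have h2 : b ^ s * (1 - ε) ≤ X ^ s := by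
    have hmul : X ^ s = b ^ s * (1 - ε) ^ s := by
      simp only [hX]; rw [mul_rpow (le_of_lt hb0) (by linarith)]
    have : (1 - ε) ≤ (1 - ε) ^ s := by
      have := rpow_le_rpow_of_exponent_ge (by linarith : (0:ℝ) < 1 - ε) (by linarith) hs1
      rwa [rpow_one] at this
    rw [hmul]
    have hbs0 : 0 < b ^ s := rpow_pos_of_pos hb0 s
    nlinarith
  -- μ/X ≤ D/4
  have h3 : μ / X ≤ D / 4 := by
    have hμb : μ / X ≤ 2 * μ / b := by
      rw [div_le_div_iff₀ hX0 hb0]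
      nlinarith
    have : 2 * μ / b ≤ D / 4 := by
      rw [div_le_div_iff₀ hb0 (by norm_num : (0:ℝ) < 4)]
      nlinarith
    linarith
  have hbs0 : 0 < b ^ s := rpow_pos_of_pos hb0 s
  nlinarith [hkey, h2, h3]

set_option maxHeartbeats 1000000 in
open Real in
lemma kraft_B {s ε v μ : ℝ} (hs0 : 0 < s) (hs2 : s ≤ 1/2) (hε0 : 0 < ε) (hε16 : ε ≤ 1/16)
    (hεv : ε ≤ v) (hv4 : v ≤ 1/4) (hμ0 : 0 ≤ μ) (hμ1 : μ ≤ ε * ε ^ s / 2) (hμ2 : μ ≤ ε / 8) :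
    1 ≤ (1 - 2*v) ^ s + (v - μ) ^ s := by
  have hs1 : s ≤ 1 := by linarith
  have hv0 : 0 < v := lt_of_lt_of_le hε0 hεv
  have hμv : μ < v := by linarith [hμ2]
  have hv1 : v ≤ 1 := by linarith
  have hes0 : 0 < ε ^ s := rpow_pos_of_pos hε0 s
  have hkey := rpow_sub_margin hv0 hv1 hμ0 hμv hs0 hs1
  have hμε : μ / v ≤ ε ^ s / 2 := by
    have h1 : μ / v ≤ μ / ε := by
      apply div_le_div_of_nonneg_left hμ0 hε0 hεv |>.trans_eq rfl
    have h2 : μ / ε ≤ ε ^ s / 2 := by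
      rw [div_le_div_iff₀ hε0 (by norm_num : (0:ℝ) < 2)]
      nlinarith
    linarith
  have hμε8 : μ / v ≤ 1 / 8 := by
    have h1 : μ / v ≤ μ / ε := by
      apply div_le_div_of_nonneg_left hμ0 hε0 hεv |>.trans_eq rfl
    have h2 : μ / ε ≤ 1 / 8 := by
      rw [div_le_div_iff₀ hε0 (by norm_num : (0:ℝ) < 8)]
      linarith
    linarith
  have hvs_es : ε ^ s ≤ v ^ s := rpow_le_rpow (le_of_lt hε0) hεv (le_of_lt hs0)
  by_cases hv16 : v ≤ 1/16
  · -- small v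
    have h12v : (1 - 2*v) ≤ (1 - 2*v) ^ s := by
      have := rpow_le_rpow_of_exponent_ge (by linarith : (0:ℝ) < 1 - 2*v) (by linarith) hs1
      rwa [rpow_one] at this
    have h4v : 4 * v ≤ v ^ s := by
      have hvinv : (16:ℝ) ≤ v⁻¹ := by
        rw [le_inv_comm₀ (by norm_num) hv0]
        linarith [hv16]
      have e1 : (16:ℝ) ^ ((1:ℝ)/2) ≤ (v⁻¹) ^ (1 - s) := by
        calc (16:ℝ) ^ ((1:ℝ)/2) ≤ (16:ℝ) ^ (1 - s) :=
            rpow_le_rpow_of_exponent_le (by norm_num) (by linarith)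
        _ ≤ (v⁻¹) ^ (1 - s) := rpow_le_rpow (by norm_num) hvinv (by linarith)
      have e2 : (16:ℝ) ^ ((1:ℝ)/2) = 4 := by
        rw [show (16:ℝ) = 4 ^ (2:ℕ) by norm_num, ← rpow_natCast (4:ℝ) 2, ← rpow_mul (by norm_num)]
        norm_num
      have e3 : v * ((v⁻¹) ^ (1 - s)) = v ^ s := by
        rw [inv_rpow (le_of_lt hv0), ← rpow_neg (le_of_lt hv0)]
        calc v * v ^ (-(1 - s)) = v ^ (1:ℝ) * v ^ (-(1 - s)) := by rw [rpow_one]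
        _ = v ^ (1 + -(1 - s)) := (rpow_add hv0 _ _).symm
        _ = v ^ s := by ring_nf
      rw [e2] at e1
      calc 4 * v = v * 4 := by ring
      _ ≤ v * ((v⁻¹) ^ (1 - s)) := mul_le_mul_of_nonneg_left e1 (le_of_lt hv0)
      _ = v ^ s := e3
    nlinarith
  · -- v ∈ (1/16, 1/4]
    push_neg at hv16
    set a := (1 - 2*v) ^ ((1:ℝ)/2) with ha
    set e := v ^ ((1:ℝ)/2) with he
    have h12v0 : (0:ℝ) < 1 - 2*v := by linarith
    have hA : (1 - 2*v) ^ ((1:ℝ)/2) ≤ (1 - 2*v) ^ s :=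
      rpow_le_rpow_of_exponent_ge h12v0 (by linarith) hs2
    have hE : v ^ ((1:ℝ)/2) ≤ v ^ s :=
      rpow_le_rpow_of_exponent_ge hv0 hv1 hs2
    have ha2 : a ^ (2:ℕ) = 1 - 2*v := by
      rw [ha, ← rpow_natCast ((1-2*v) ^ ((1:ℝ)/2)) 2, ← rpow_mul (le_of_lt h12v0)]
      norm_num
    have he2 : e ^ (2:ℕ) = v := by
      rw [he, ← rpow_natCast (v ^ ((1:ℝ)/2)) 2, ← rpow_mul (le_of_lt hv0)]
      norm_num
    have ha0 : 0 ≤ a := rpow_nonneg (le_of_lt h12v0) _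
    have he0 : 0 ≤ e := rpow_nonneg (le_of_lt hv0) _
    have he_ge : 1/4 ≤ e := by
      have : ((1:ℝ)/16) ^ ((1:ℝ)/2) ≤ e := rpow_le_rpow (by norm_num) (le_of_lt hv16) (by norm_num)
      have e4 : ((1:ℝ)/16) ^ ((1:ℝ)/2) = 1/4 := by
        rw [show (1:ℝ)/16 = (1/4 : ℝ) ^ (2:ℕ) by norm_num, ← rpow_natCast ((1:ℝ)/4) 2,
          ← rpow_mul (by norm_num)]
        norm_num
      linarith [e4 ▸ this]
    have he_le : e ≤ 1/2 := by
      have : e ≤ ((1:ℝ)/4) ^ ((1:ℝ)/2) := rpow_le_rpow (le_of_lt hv0) hv4 (by norm_num)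
      have e5 : ((1:ℝ)/4) ^ ((1:ℝ)/2) = 1/2 := by
        rw [show (1:ℝ)/4 = (1/2 : ℝ) ^ (2:ℕ) by norm_num, ← rpow_natCast ((1:ℝ)/2) 2,
          ← rpow_mul (by norm_num)]
        norm_num
      linarith [e5 ▸ this]
    have hae : 9/8 ≤ a + e := by
      have hprod : 0 ≤ (e - 1/4) * (1/2 - e) :=
        mul_nonneg (by linarith) (by linarith)
      have ht0 : (0:ℝ) ≤ 9/8 - e := by linarith
      have h1 : (9/8 - e) ^ (2:ℕ) ≤ a ^ (2:ℕ) := by nlinarith [hprod, ha2, he2]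
      have h2 : 9/8 - e ≤ a := by
        nlinarith [h1, ha0, ht0, sq_nonneg (a - (9/8 - e))]
      linarith
    linarith

set_option maxHeartbeats 4000000 in
lemma main_estimate (d k : ℕ) (hk : 1 < k) (F : Set (Fin d → ℝ))
    (hP : ∀ x ∈ F, ∀ R : ℝ, 0 < R → R < 1 →
      ∃ y ∈ F ∩ closedBall x (R / 2), ∃ z ∈ F ∩ closedBall x (R / 2),
        Disjoint (interior (closedBall y (R / 2 ^ k / 2)))
          (interior (closedBall z (R / 2 ^ k / 2))))
    (s : ℝ) (hs0 : 0 < s) (hsk : s < 1 / (k:ℝ)) :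
    ∃ C : ℝ, 0 < C ∧ ∀ R : ℝ, 0 < R → R < 1 → ∀ r : ℝ, 0 < r → r < R →
      ∀ x ∈ F, C * (R / r) ^ s ≤ (coverNum d (closedBall x R ∩ F) r : ℝ) := by
  classical
  have hk2 : (2:ℝ) ≤ (k:ℝ) := by exact_mod_cast hk
  have hk0 : (0:ℝ) < (k:ℝ) := by linarith
  have hs2 : s ≤ 1/2 := by
    have h1 : 1/(k:ℝ) ≤ 1/2 := by
      rw [div_le_div_iff₀ hk0 (by norm_num : (0:ℝ) < 2)]; linarith
    linarith
  have hs1 : s ≤ 1 := by linarith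
  set b : ℝ := ((2:ℝ) ^ k)⁻¹ with hbdef
  have h2k4 : (4:ℝ) ≤ (2:ℝ)^k := by
    calc (4:ℝ) = 2^(2:ℕ) := by norm_num
    _ ≤ 2^k := pow_le_pow_right₀ (by norm_num) hk
  have h2k0 : (0:ℝ) < (2:ℝ)^k := by positivity
  have hb0 : 0 < b := by rw [hbdef]; positivity
  have hb14 : b ≤ 1/4 := by
    rw [hbdef, inv_le_comm₀ h2k0 (by norm_num)]
    linarith
  have hbs : 1 < 2 * b ^ s := by
    have hb_rpow : b = (2:ℝ) ^ (-(k:ℝ)) := by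
      rw [hbdef, ← Real.rpow_natCast 2 k, ← Real.rpow_neg (by norm_num)]
    have hbs_eq : b ^ s = (2:ℝ) ^ (-(k:ℝ) * s) := by
      rw [hb_rpow, ← Real.rpow_mul (by norm_num)]
    rw [hbs_eq]
    have h1 : (2:ℝ) * 2 ^ (-(k:ℝ)*s) = 2 ^ (1 + -(k:ℝ)*s) := by
      rw [Real.rpow_add (by norm_num), Real.rpow_one]
    rw [h1]
    have hks : (k:ℝ) * s < 1 := by
      have := (lt_div_iff₀ hk0).1 hsk
      linarith [this]
    calc (1:ℝ) = 2 ^ (0:ℝ) := (Real.rpow_zero 2).symm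
    _ < 2 ^ (1 + -(k:ℝ)*s) := Real.rpow_lt_rpow_of_exponent_lt (by norm_num) (by linarith)
  set D : ℝ := 2 * b ^ s - 1 with hDdef
  have hD0 : 0 < D := by rw [hDdef]; linarith
  set ε : ℝ := min (min (D/4) (b/2)) (1/16) with hεdef
  have hε0 : 0 < ε := lt_min (lt_min (by linarith) (by linarith)) (by norm_num)
  have hε16 : ε ≤ 1/16 := min_le_right _ _
  have hεD : ε ≤ D/4 := le_trans (min_le_left _ _) (min_le_left _ _)
  have hεb : ε ≤ b/2 := le_trans (min_le_left _ _) (min_le_right _ _)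
  set ε₁ : ℝ := b * (1 - ε) with hε₁def
  have hε₁0 : 0 < ε₁ := by rw [hε₁def]; nlinarith
  have hε₁b : ε₁ ≤ b := by rw [hε₁def]; nlinarith
  have hε₁4 : ε₁ ≤ 1/4 := le_trans hε₁b hb14
  set γ : ℝ := 1 - 2*ε with hγdef
  have hγ7 : 7/8 ≤ γ := by rw [hγdef]; linarith
  have hγ0 : (0:ℝ) < γ := by linarith
  have hγ1 : γ < 1 := by rw [hγdef]; linarith
  have hes0 : 0 < ε ^ s := Real.rpow_pos_of_pos hε0 s
  set m₀ : ℝ := min (min (D*b/8) (ε * ε ^ s / 2)) (min (ε/8) (b/2)) with hm₀def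
  have hm₀0 : 0 < m₀ := by
    apply lt_min (lt_min (by positivity) (by positivity)) (lt_min (by linarith) (by linarith))
  have hm₀1 : m₀ ≤ D*b/8 := le_trans (min_le_left _ _) (min_le_left _ _)
  have hm₀2 : m₀ ≤ ε * ε ^ s / 2 := le_trans (min_le_left _ _) (min_le_right _ _)
  have hm₀3 : m₀ ≤ ε/8 := le_trans (min_le_right _ _) (min_le_left _ _)
  have hm₀4 : m₀ ≤ b/2 := le_trans (min_le_right _ _) (min_le_right _ _)
  set Λ : ℝ := 4 / m₀ with hΛdef
  have hΛ0 : 0 < Λ := by rw [hΛdef]; positivity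
  set c : ℝ := Λ ^ (-s) with hcdef
  have hc0 : 0 < c := Real.rpow_pos_of_pos hΛ0 _
  have hcΛ : c * Λ ^ s = 1 := by
    rw [hcdef, ← Real.rpow_add hΛ0]
    simp
  clear_value b D ε ε₁ γ m₀ Λ c
  -- base case
  have hbase : ∀ x ∈ F, ∀ τ r : ℝ, 0 < r → 0 < τ → τ ≤ Λ * r →
      c * (τ / r) ^ s ≤ (coverNum d (F ∩ closedBall x τ) r : ℝ) := by
    intro x hx τ r hr hτ hτΛ
    have hnonempty : (F ∩ closedBall x τ).Nonempty :=
      ⟨x, hx, mem_closedBall_self (le_of_lt hτ)⟩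
    have hcov := exists_cover_of_subset_ball hr
      (inter_subset_right : F ∩ closedBall x τ ⊆ closedBall x τ)
    have h1 : 1 ≤ coverNum d (F ∩ closedBall x τ) r := one_le_coverNum hnonempty hcov
    have h2 : c * (τ / r) ^ s ≤ 1 := by
      have hτr : τ / r ≤ Λ := by rw [div_le_iff₀ hr]; linarith
      have h3 : (τ/r) ^ s ≤ Λ ^ s := Real.rpow_le_rpow (by positivity) hτr (le_of_lt hs0)
      calc c * (τ/r)^s ≤ c * Λ ^ s := by nlinarith
      _ = 1 := hcΛ
    calc c * (τ/r)^s ≤ 1 := h2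
    _ ≤ _ := by exact_mod_cast h1
  -- main induction
  have claim : ∀ n : ℕ, ∀ x ∈ F, ∀ τ r : ℝ, 0 < r → 0 < τ → τ < 1/2 →
      τ ≤ Λ * r / γ ^ n →
      c * (τ / r) ^ s ≤ (coverNum d (F ∩ closedBall x τ) r : ℝ) := by
    intro n
    induction n with
    | zero =>
      intro x hx τ r hr hτ0 hτ12 hτle
      exact hbase x hx τ r hr hτ0 (by simpa using hτle)
    | succ n IH =>
      intro x hx τ r hr hτ0 hτ12 hτle
      by_cases hΛr : τ ≤ Λ * r
      · exact hbase x hx τ r hr hτ0 hΛr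
      push_neg at hΛr
      have hτne : τ ≠ 0 := ne_of_gt hτ0
      have hγn : (0:ℝ) < γ ^ n := pow_pos hγ0 n
      have hγn1 : (0:ℝ) < γ ^ (n+1) := pow_pos hγ0 (n+1)
      have hchild : γ * τ ≤ Λ * r / γ ^ n := by
        calc γ * τ ≤ γ * (Λ * r / γ ^ (n+1)) :=
          mul_le_mul_of_nonneg_left hτle (le_of_lt hγ0)
        _ = Λ * r / γ ^ n := by
          rw [pow_succ]
          field_simp
      have hmargin : 4 * r < m₀ * τ := by
        have h1 : Λ * r < τ := hΛr
        rw [hΛdef, div_mul_eq_mul_div, div_lt_iff₀ hm₀0] at h1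
        linarith only [h1]
      have hτ0' : (0:ℝ) ≤ τ := le_of_lt hτ0
      have hr1 : 2 * r ≤ (D*b/8) * τ := by
        have h := mul_le_mul_of_nonneg_right hm₀1 hτ0'
        linarith only [h, hmargin, hr]
      have hr2 : 2 * r ≤ (ε * ε ^ s / 2) * τ := by
        have h := mul_le_mul_of_nonneg_right hm₀2 hτ0'
        linarith only [h, hmargin, hr]
      have hr3 : 2 * r ≤ (ε/8) * τ := by
        have h := mul_le_mul_of_nonneg_right hm₀3 hτ0'
        linarith only [h, hmargin, hr]
      have hr4 : 2 * r ≤ (b/2) * τ := by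
        have h := mul_le_mul_of_nonneg_right hm₀4 hτ0'
        linarith only [h, hmargin, hr]
      have hτε₁ : τ * ε₁ ≤ τ * (1/4) := mul_le_mul_of_nonneg_left hε₁4 hτ0'
      have hτε : τ * ε ≤ τ * (1/16) := mul_le_mul_of_nonneg_left hε16 hτ0'
      have hτε0 : 0 < ε * τ := mul_pos hε0 hτ0
      have hγττ : γ * τ ≤ τ := by
        have h := mul_le_mul_of_nonneg_right (le_of_lt hγ1) hτ0'
        linarith only [h]
      by_cases hband : ∃ p, p ∈ F ∧ dist p x ≤ τ ∧ τ * (1 - ε₁) < dist p x ∧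
          dist p x ≤ τ * (1 - ε)
      · -- CASE B : ring point
        obtain ⟨p, hpF, hpτ, hp1, hp2⟩ := hband
        set t' : ℝ := 2 * dist p x - τ with ht'def
        set w2 : ℝ := τ - dist p x - 2*r with hw2def
        clear_value t' w2
        have hd0 : (0:ℝ) ≤ dist p x := dist_nonneg
        have ht'0 : 0 < t' := by rw [ht'def]; linarith only [hp1, hτε₁, hτ0]
        have ht'γ : t' ≤ γ * τ := by rw [ht'def, hγdef]; linarith only [hp2]
        have hw20 : 0 < w2 := by rw [hw2def]; linarith only [hp2, hr3, hτε0]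
        have hw2γ : w2 ≤ γ * τ := by
          rw [hw2def, hγdef]
          linarith only [hp1, hτε₁, hτε, hr, hτ0]
        have hsplit : coverNum d (F ∩ closedBall x t') r + coverNum d (F ∩ closedBall p w2) r ≤
            coverNum d (F ∩ closedBall x τ) r := by
          apply coverNum_split hr
          · exact fun q hq =>
              ⟨hq.1, closedBall_subset_closedBall (by linarith only [ht'γ, hγττ]) hq.2⟩
          · intro q hq
            refine ⟨hq.1, mem_closedBall.2 ?_⟩
            have h1 : dist q p ≤ w2 := mem_closedBall.1 hq.2
            have h2 : dist q x ≤ dist q p + dist p x := dist_triangle _ _ _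
            rw [hw2def] at h1
            linarith only [h1, h2, hr]
          · intro u hu q hq
            have h1 : dist u x ≤ t' := mem_closedBall.1 hu.2
            have h2 : dist q p ≤ w2 := mem_closedBall.1 hq.2
            have h3 : dist x p ≤ dist x u + dist u q + dist q p := dist_triangle4 _ _ _ _
            have h4 : dist x p = dist p x := dist_comm _ _
            have h5 : dist x u = dist u x := dist_comm _ _
            rw [ht'def] at h1; rw [hw2def] at h2
            rw [h4, h5] at h3
            linarith only [h1, h2, h3, hr]
          · exact exists_cover_of_subset_ball hr
              (inter_subset_right : F ∩ closedBall x τ ⊆ closedBall x τ)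
        have hIH1 := IH x hx t' r hr ht'0 (by linarith only [ht'γ, hγττ, hτ12])
          (le_trans ht'γ hchild)
        have hIH2 := IH p hpF w2 r hr hw20 (by linarith only [hw2γ, hγττ, hτ12])
          (le_trans hw2γ hchild)
        set v : ℝ := (τ - dist p x)/τ with hvdef
        set μ : ℝ := 2*r/τ with hμdef
        clear_value v μ
        have hεv : ε ≤ v := by
          rw [hvdef, le_div_iff₀ hτ0]; linarith only [hp2]
        have hv4 : v ≤ 1/4 := by
          rw [hvdef, div_le_iff₀ hτ0]; linarith only [hp1, hτε₁]
        have hμ0 : 0 ≤ μ := by rw [hμdef]; positivity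
        have hμ1 : μ ≤ ε * ε ^ s / 2 := by
          rw [hμdef, div_le_iff₀ hτ0]; linarith only [hr2]
        have hμ2 : μ ≤ ε / 8 := by
          rw [hμdef, div_le_iff₀ hτ0]; linarith only [hr3]
        have hkraft := kraft_B hs0 hs2 hε0 hε16 hεv hv4 hμ0 hμ1 hμ2
        have hvt : t'/τ = 1 - 2*v := by
          rw [ht'def, hvdef]; field_simp [hτne]
          all_goals ring
        have hw2τ : w2/τ = v - μ := by
          rw [hw2def, hvdef, hμdef]; field_simp [hτne]
          all_goals ring
        have e1 : (t'/r)^s = (τ/r)^s * (t'/τ)^s := by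
          rw [← Real.mul_rpow (by positivity) (by positivity)]
          congr 1
          field_simp [hτne]
          all_goals ring
        have e2 : (w2/r)^s = (τ/r)^s * (w2/τ)^s := by
          rw [← Real.mul_rpow (by positivity) (by positivity)]
          congr 1
          field_simp [hτne]
          all_goals ring
        have hpos : (0:ℝ) < (τ/r)^s := Real.rpow_pos_of_pos (by positivity) _
        calc c * (τ/r)^s
            ≤ c * (t'/r)^s + c * (w2/r)^s := by
              rw [e1, e2, hvt, hw2τ]
              have hcb := mul_le_mul_of_nonneg_left hkraft
                (le_of_lt (mul_pos hc0 hpos))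
              linarith only [hcb]
        _ ≤ (coverNum d (F ∩ closedBall x t') r : ℝ) + (coverNum d (F ∩ closedBall p w2) r : ℝ) :=
              add_le_add hIH1 hIH2
        _ ≤ (coverNum d (F ∩ closedBall x τ) r : ℝ) := by exact_mod_cast hsplit
      · -- CASE A : branch
        push_neg at hband
        set ρ : ℝ := 2*τ*(1-ε) with hρdef
        clear_value ρ
        have hε1' : (0:ℝ) < 1 - ε := by linarith only [hε16]
        have hρ0 : 0 < ρ := by rw [hρdef]; positivity
        have hρ1 : ρ < 1 := by
          rw [hρdef]
          have h1 : 2*τ*(1-ε) ≤ 2*τ*1 :=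
            mul_le_mul_of_nonneg_left (by linarith only [hε0]) (by linarith only [hτ0])
          linarith only [h1, hτ12]
        obtain ⟨y, hy, z, hz, hdisj⟩ := hP x hx ρ hρ0 hρ1
        obtain ⟨hyF, hyB⟩ := hy
        obtain ⟨hzF, hzB⟩ := hz
        have hyB' : dist y x ≤ τ * (1-ε) := by
          have h := mem_closedBall.1 hyB
          rw [hρdef] at h; linarith only [h]
        have hzB' : dist z x ≤ τ * (1-ε) := by
          have h := mem_closedBall.1 hzB
          rw [hρdef] at h; linarith only [h]
        have hyτ : dist y x ≤ τ := by linarith only [hyB', hτε0]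
        have hzτ : dist z x ≤ τ := by linarith only [hzB', hτε0]
        have hy1 : dist y x ≤ τ * (1 - ε₁) := by
          by_contra hcon
          push_neg at hcon
          exact absurd hyB' (not_le.2 (hband y hyF hyτ hcon))
        have hz1 : dist z x ≤ τ * (1 - ε₁) := by
          by_contra hcon
          push_neg at hcon
          exact absurd hzB' (not_le.2 (hband z hzF hzτ hcon))
        have hρb : (0:ℝ) < ρ / 2^k / 2 := by positivity
        have hgap := dist_ge_of_disjoint_interiors hρb hdisj
        have hgap' : ρ * b ≤ dist y z := by
          have heq : 2*(ρ / 2^k / 2) = ρ * b := by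
            rw [hbdef]; field_simp
            all_goals ring
          linarith only [heq ▸ hgap]
        set w : ℝ := τ * b * (1-ε) - 2*r with hwdef
        clear_value w
        have hτb : 0 < τ * b := mul_pos hτ0 hb0
        have hw0 : 0 < w := by
          rw [hwdef]
          have h15 : (15:ℝ)/16 ≤ 1 - ε := by linarith only [hε16]
          have h1 := mul_le_mul_of_nonneg_left h15 (le_of_lt hτb)
          linarith only [hr4, h1, hτb]
        have hwγ : w ≤ γ * τ := by
          rw [hwdef, hγdef]
          have hτb14 : τ * b ≤ τ * (1/4) := mul_le_mul_of_nonneg_left hb14 hτ0'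
          have hwb : τ * b * (1-ε) ≤ τ * b * 1 :=
            mul_le_mul_of_nonneg_left (by linarith only [hε0]) (le_of_lt hτb)
          linarith only [hwb, hτb14, hτε, hr, hτ0]
        have hy1' : dist y x ≤ τ * (1 - b*(1-ε)) := by rw [hε₁def] at hy1; exact hy1
        have hz1' : dist z x ≤ τ * (1 - b*(1-ε)) := by rw [hε₁def] at hz1; exact hz1
        have hsplit : coverNum d (F ∩ closedBall y w) r + coverNum d (F ∩ closedBall z w) r ≤
            coverNum d (F ∩ closedBall x τ) r := by
          apply coverNum_split hr
          · intro q hq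
            refine ⟨hq.1, mem_closedBall.2 ?_⟩
            have h1 : dist q y ≤ w := mem_closedBall.1 hq.2
            have h2 : dist q x ≤ dist q y + dist y x := dist_triangle _ _ _
            rw [hwdef] at h1
            linarith only [h1, h2, hy1', hr]
          · intro q hq
            refine ⟨hq.1, mem_closedBall.2 ?_⟩
            have h1 : dist q z ≤ w := mem_closedBall.1 hq.2
            have h2 : dist q x ≤ dist q z + dist z x := dist_triangle _ _ _
            rw [hwdef] at h1
            linarith only [h1, h2, hz1', hr]
          · intro u hu q hq
            have h1 : dist u y ≤ w := mem_closedBall.1 hu.2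
            have h2 : dist q z ≤ w := mem_closedBall.1 hq.2
            have h3 : dist y z ≤ dist y u + dist u q + dist q z := dist_triangle4 _ _ _ _
            have h4 : dist y u = dist u y := dist_comm _ _
            rw [hwdef] at h1 h2
            rw [hρdef] at hgap'
            rw [h4] at h3
            linarith only [h1, h2, h3, hgap', hr]
          · exact exists_cover_of_subset_ball hr
              (inter_subset_right : F ∩ closedBall x τ ⊆ closedBall x τ)
        have hIH1 := IH y hyF w r hr hw0 (by linarith only [hwγ, hγττ, hτ12])
          (le_trans hwγ hchild)
        have hIH2 := IH z hzF w r hr hw0 (by linarith only [hwγ, hγττ, hτ12])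
          (le_trans hwγ hchild)
        set μ : ℝ := 2*r/τ with hμdef
        clear_value μ
        have hμ0 : 0 ≤ μ := by rw [hμdef]; positivity
        have hμA : μ ≤ D * b / 8 := by
          rw [hμdef, div_le_iff₀ hτ0]; linarith only [hr1]
        have hkraft := kraft_A hs0 hs1 hb0 hb14 hε0 hε16 hbs (by rw [← hDdef]; exact hεD)
          hμ0 (by rw [← hDdef]; exact hμA)
        have hwτ : w/τ = b * (1-ε) - μ := by
          rw [hwdef, hμdef]; field_simp [hτne]
          all_goals ring
        have e1 : (w/r)^s = (τ/r)^s * (w/τ)^s := by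
          rw [← Real.mul_rpow (by positivity) (by positivity)]
          congr 1
          field_simp [hτne]
          all_goals ring
        have hpos : (0:ℝ) < (τ/r)^s := Real.rpow_pos_of_pos (by positivity) _
        calc c * (τ/r)^s
            ≤ c * (w/r)^s + c * (w/r)^s := by
              rw [e1, hwτ]
              have hcb := mul_le_mul_of_nonneg_left hkraft
                (le_of_lt (mul_pos hc0 hpos))
              linarith only [hcb]
        _ ≤ (coverNum d (F ∩ closedBall y w) r : ℝ) + (coverNum d (F ∩ closedBall z w) r : ℝ) :=
              add_le_add hIH1 hIH2
        _ ≤ (coverNum d (F ∩ closedBall x τ) r : ℝ) := by exact_mod_cast hsplit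
  -- wrap up
  refine ⟨c * (1/2:ℝ) ^ s, by positivity, ?_⟩
  intro R hR0 hR1 r hr0 hrR x hx
  set τ : ℝ := R/2 with hτdef
  have hτ0 : 0 < τ := by rw [hτdef]; linarith
  have hτ12 : τ < 1/2 := by rw [hτdef]; linarith
  obtain ⟨n, hn⟩ := exists_pow_lt_of_lt_one (show (0:ℝ) < Λ * r / τ by positivity) hγ1
  have hτle : τ ≤ Λ * r / γ ^ n := by
    have hγn : (0:ℝ) < γ ^ n := pow_pos hγ0 n
    rw [le_div_iff₀ hγn]
    rw [lt_div_iff₀ hτ0] at hn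
    linarith [hn]
  have hclaim := claim n x hx τ r hr0 hτ0 hτ12 hτle
  have hmono : coverNum d (F ∩ closedBall x τ) r ≤ coverNum d (closedBall x R ∩ F) r := by
    apply coverNum_mono
    · intro q hq
      exact ⟨closedBall_subset_closedBall (by rw [hτdef]; linarith) hq.2, hq.1⟩
    · exact exists_cover_of_subset_ball hr0
        (inter_subset_left : closedBall x R ∩ F ⊆ closedBall x R)
  have heq : c * (1/2:ℝ)^s * (R/r)^s = c * (τ/r)^s := by
    rw [mul_assoc, ← Real.mul_rpow (by norm_num) (by positivity)]
    congr 2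
    rw [hτdef]; field_simp
    all_goals ring
  rw [heq]
  calc c * (τ/r)^s ≤ (coverNum d (F ∩ closedBall x τ) r : ℝ) := hclaim
  _ ≤ _ := by exact_mod_cast hmono

/-- If for every `x ∈ F` and `R ∈ (0,1)` the cube `Q(x,R)` contains two cubes of side
`2^{-k} R` with disjoint interiors centred at points of `F ∩ Q(x,R)`, then
`dim_L F ≥ 1/k`. -/
theorem stmt7 (d : ℕ) (k : ℕ) (hk : 1 < k) (F : Set (Fin d → ℝ))
    (hF : IsCompact F) (hne : F.Nonempty)
    (hP : ∀ x ∈ F, ∀ R : ℝ, 0 < R → R < 1 →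
      ∃ y ∈ F ∩ closedBall x (R / 2), ∃ z ∈ F ∩ closedBall x (R / 2),
        Disjoint (interior (closedBall y (R / 2 ^ k / 2)))
          (interior (closedBall z (R / 2 ^ k / 2)))) :
    1 / (k : ℝ) ≤ lowerDim d F := by
  classical
  set S : Set ℝ := {s : ℝ | 0 ≤ s ∧ ∃ C : ℝ, 0 < C ∧ ∀ R : ℝ, 0 < R → R < 1 →
    ∀ r : ℝ, 0 < r → r < R →
    ∀ x ∈ F, C * (R / r) ^ s ≤ (coverNum d (closedBall x R ∩ F) r : ℝ)} with hSdef
  have hLD : lowerDim d F = sSup S := rfl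
  have h0S : (0:ℝ) ∈ S := by
    refine ⟨le_refl 0, 1, one_pos, ?_⟩
    intro R hR0 hR1 r hr0 hrR x hx
    rw [Real.rpow_zero, mul_one]
    have hne2 : (closedBall x R ∩ F).Nonempty := ⟨x, mem_closedBall_self (le_of_lt hR0), hx⟩
    have hcov := exists_cover_of_subset_ball hr0
      (inter_subset_left : closedBall x R ∩ F ⊆ closedBall x R)
    exact_mod_cast one_le_coverNum hne2 hcov
  have hBdd : BddAbove S := by
    refine ⟨(d:ℝ), ?_⟩
    rintro t ⟨ht0, C, hC, hineq⟩
    by_contra hcon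
    push_neg at hcon
    obtain ⟨x₀, hx₀⟩ := hne
    have key : ∀ r : ℝ, 0 < r → r ≤ 1/4 → C * ((1/2)/r) ^ t ≤ ((2:ℝ)/r) ^ (d:ℝ) := by
      intro r hr0 hr14
      have h1 := hineq (1/2) (by norm_num) (by norm_num) r hr0 (by linarith) x₀ hx₀
      obtain ⟨tt, hcover, hcard⟩ := grid_cover x₀ (1/2) r hr0
      have h2 : coverNum d (closedBall x₀ (1/2) ∩ F) r ≤ tt.card :=
        coverNum_le_card tt ((inter_subset_left).trans hcover)
      have h4 : ((⌊2*(1/2)/r⌋₊ + 1 : ℕ):ℝ) ≤ 2/r := by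
        have hfl : ((⌊2*(1/2)/r⌋₊ : ℕ):ℝ) ≤ 2*(1/2)/r := Nat.floor_le (by positivity)
        have h1r : (1:ℝ) ≤ 1/r := by rw [le_div_iff₀ hr0]; linarith
        have e0 : (2:ℝ)*(1/2)/r = 1/r := by ring
        rw [e0] at hfl
        have e0' : (2:ℝ)/r = 1/r + 1/r := by ring
        push_cast
        linarith
      have h5 : ((tt.card:ℕ):ℝ) ≤ ((2:ℝ)/r) ^ (d:ℕ) := by
        calc ((tt.card:ℕ):ℝ) ≤ (((⌊2*(1/2)/r⌋₊ + 1)^d : ℕ):ℝ) := by exact_mod_cast hcard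
        _ = (((⌊2*(1/2)/r⌋₊ + 1:ℕ):ℝ))^(d:ℕ) := by push_cast; ring
        _ ≤ ((2:ℝ)/r)^(d:ℕ) := pow_le_pow_left₀ (by positivity) h4 d
      have h6 : ((2:ℝ)/r) ^ (d:ℕ) = ((2:ℝ)/r) ^ (d:ℝ) := (Real.rpow_natCast _ d).symm
      calc C * ((1/2)/r)^t ≤ (coverNum d (closedBall x₀ (1/2) ∩ F) r : ℝ) := h1
      _ ≤ ((tt.card:ℕ):ℝ) := by exact_mod_cast h2
      _ ≤ ((2:ℝ)/r)^(d:ℕ) := h5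
      _ = ((2:ℝ)/r)^(d:ℝ) := h6
    set td := t - (d:ℝ) with htd
    have htd0 : 0 < td := by rw [htd]; linarith
    set K : ℝ := ((2:ℝ)^(d:ℝ) * (2:ℝ)^t) / C with hK
    have h2d0 : (0:ℝ) < (2:ℝ)^(d:ℝ) := Real.rpow_pos_of_pos (by norm_num) _
    have h2t0 : (0:ℝ) < (2:ℝ)^t := Real.rpow_pos_of_pos (by norm_num) _
    have hK0 : 0 < K := by rw [hK]; positivity
    set u : ℝ := max 4 ((K+1) ^ (1/td)) with hu
    have hu4 : (4:ℝ) ≤ u := le_max_left _ _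
    have hu0 : (0:ℝ) < u := by linarith
    have hru0 : (0:ℝ) < 1/u := by positivity
    have hr14 : 1/u ≤ 1/4 := by
      rw [div_le_div_iff₀ hu0 (by norm_num)]; linarith
    have hkey := key (1/u) hru0 hr14
    have e1 : (1/2:ℝ)/(1/u) = u/2 := by field_simp
    have e2 : (2:ℝ)/(1/u) = 2*u := by field_simp
    rw [e1, e2] at hkey
    have e3 : (u/2:ℝ)^t = u^t / (2:ℝ)^t := Real.div_rpow (by linarith) (by norm_num) t
    have e4 : ((2:ℝ)*u)^(d:ℝ) = (2:ℝ)^(d:ℝ) * u^(d:ℝ) := Real.mul_rpow (by norm_num) (by linarith)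
    rw [e3, e4] at hkey
    have e5 : u^t = u^(d:ℝ) * u^td := by
      rw [← Real.rpow_add hu0]; congr 1; rw [htd]; ring
    have hud0 : 0 < u^(d:ℝ) := Real.rpow_pos_of_pos hu0 _
    have hutd : u^td ≤ K := by
      rw [e5] at hkey
      have h7 := mul_le_mul_of_nonneg_right hkey (le_of_lt h2t0)
      have e6 : C * (u^(d:ℝ) * u^td / (2:ℝ)^t) * (2:ℝ)^t = C * u^(d:ℝ) * u^td := by
        field_simp
        all_goals ring
      rw [e6] at h7
      have h8 := (div_le_div_iff_of_pos_right hud0).2 h7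
      have e7 : C * u^(d:ℝ) * u^td / u^(d:ℝ) = C * u^td := by
        field_simp
      have e8 : (2:ℝ)^(d:ℝ) * u^(d:ℝ) * (2:ℝ)^t / u^(d:ℝ) = (2:ℝ)^(d:ℝ) * (2:ℝ)^t := by
        field_simp
      rw [e7, e8] at h8
      rw [hK, le_div_iff₀ hC]
      linarith
    have hbig : K + 1 ≤ u^td := by
      have h9 : ((K+1) ^ ((1:ℝ)/td)) ^ td ≤ u ^ td :=
        Real.rpow_le_rpow (Real.rpow_nonneg (by linarith) _) (le_max_right _ _) (le_of_lt htd0)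
      rwa [← Real.rpow_mul (by linarith : (0:ℝ) ≤ K+1), one_div,
        inv_mul_cancel₀ (ne_of_gt htd0), Real.rpow_one] at h9
    linarith
  have hmem : ∀ w : ℝ, 0 < w → w < 1/(k:ℝ) → w ∈ S := by
    intro w hw0 hw1
    obtain ⟨C, hC, hineq⟩ := main_estimate d k hk F hP w hw0 hw1
    exact ⟨le_of_lt hw0, C, hC, hineq⟩
  have hk0 : (0:ℝ) < 1/(k:ℝ) := by
    have h1 : (0:ℝ) < (k:ℝ) := by
      have : (1:ℕ) < k := hk
      exact_mod_cast Nat.lt_of_lt_of_le Nat.zero_lt_one (le_of_lt this)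
    positivity
  rw [hLD]
  by_contra hcon
  push_neg at hcon
  have h0le : (0:ℝ) ≤ sSup S := le_csSup hBdd h0S
  set w := (sSup S + 1/(k:ℝ))/2 with hw
  have hw0 : 0 < w := by rw [hw]; linarith
  have hw1 : w < 1/(k:ℝ) := by rw [hw]; linarith
  have hwS : w ≤ sSup S := le_csSup hBdd (hmem w hw0 hw1)
  rw [hw] at hwS
  linarith
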